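/- Let k ≥ 3 be an integer and a > e(k−1) a real number. Then Σ_{j=1}^{k−1} (a/j)^{2j} ≤ e²·k·(a/k)^{2k−2}. -/
import Mathlib

theorem stmt_12 (k : ℕ) (hk : 3 ≤ k) (a : ℝ) (ha : a > Real.exp 1 * ((k:ℝ) - 1)) :
    ∑ j ∈ Finset.Icc 1 (k - 1), (a / (j:ℝ)) ^ (2*j) ≤
      Real.exp 1 ^ 2 * (k:ℝ) * (a / (k:ℝ)) ^ (2*k - 2) := by
  obtain ⟨m, rfl⟩ : ∃ m, k = m + 1 := ⟨k - 1, by omega⟩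
  have hm2 : 2 ≤ m := by omega
  simp only [Nat.add_sub_cancel]
  have hmpos : (0:ℝ) < m := by
    have : (2:ℝ) ≤ m := by exact_mod_cast hm2
    linarith
  have he : (0:ℝ) < Real.exp 1 := Real.exp_pos 1
  have ham : Real.exp 1 * m < a := by
    have h : ((m+1:ℕ):ℝ) - 1 = (m:ℝ) := by push_cast; ring
    rw [h] at ha; exact ha
  have hapos : 0 < a := lt_trans (by positivity) ham
  have haem : Real.exp 1 ≤ a / m := le_of_lt ((lt_div_iff₀ hmpos).2 (by linarith))
  have hkey : ∀ j ∈ Finset.Icc 1 m, (a/(j:ℝ))^(2*j) ≤ (a/(m:ℝ))^(2*m) := by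
    intro j hj
    simp only [Finset.mem_Icc] at hj
    obtain ⟨hj1, hjm⟩ := hj
    have hjpos : (0:ℝ) < j := by exact_mod_cast hj1
    have base : (a/(j:ℝ))^j ≤ (a/(m:ℝ))^m := by
      have h2 : ((m:ℝ)/j) ≤ Real.exp ((m:ℝ)/j - 1) := by
        have := Real.add_one_le_exp ((m:ℝ)/j - 1)
        linarith
      have h3 : ((m:ℝ)/j)^j ≤ Real.exp ((m:ℝ) - j) := by
        calc ((m:ℝ)/j)^j ≤ (Real.exp ((m:ℝ)/j - 1))^j :=
              pow_le_pow_left₀ (by positivity) h2 j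
          _ = Real.exp ((j:ℝ) * ((m:ℝ)/j - 1)) := by
              rw [← Real.exp_nat_mul]
          _ = Real.exp ((m:ℝ) - j) := by congr 1; field_simp
      have hd : (m:ℝ) - j = ((m - j : ℕ):ℝ) := by
        rw [Nat.cast_sub hjm]
      have h4 : Real.exp ((m:ℝ) - j) ≤ (a/m)^(m - j) := by
        rw [hd]
        calc Real.exp ((m-j:ℕ):ℝ) = Real.exp 1 ^ (m-j) := by
              rw [← Real.exp_nat_mul, mul_one]
          _ ≤ (a/m)^(m-j) := pow_le_pow_left₀ he.le haem _
      calc (a/(j:ℝ))^j = (a/m)^j * ((m:ℝ)/j)^j := by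
            rw [← mul_pow]; congr 1; field_simp
        _ ≤ (a/m)^j * (a/m)^(m-j) := by
            apply mul_le_mul_of_nonneg_left (le_trans h3 h4) (by positivity)
        _ = (a/m)^m := by rw [← pow_add]; congr 1; omega
    calc (a/(j:ℝ))^(2*j) = ((a/(j:ℝ))^j)^2 := by rw [← pow_mul, mul_comm]
      _ ≤ ((a/(m:ℝ))^m)^2 := pow_le_pow_left₀ (by positivity) base 2
      _ = (a/(m:ℝ))^(2*m) := by rw [← pow_mul, mul_comm]
  have hsum : ∑ j ∈ Finset.Icc 1 m, (a / (j:ℝ)) ^ (2*j) ≤ (m:ℝ) * (a/(m:ℝ))^(2*m) := by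
    calc ∑ j ∈ Finset.Icc 1 m, (a / (j:ℝ)) ^ (2*j)
        ≤ ∑ _j ∈ Finset.Icc 1 m, (a/(m:ℝ))^(2*m) := Finset.sum_le_sum hkey
      _ = (m:ℝ) * (a/(m:ℝ))^(2*m) := by
          rw [Finset.sum_const, Nat.card_Icc]
          simp
  have hk1pos : (0:ℝ) < ((m+1:ℕ):ℝ) := by positivity
  have hratio : ((((m+1:ℕ):ℝ))/m)^m ≤ Real.exp 1 := by
    have h2 : (((m+1:ℕ):ℝ)/m) ≤ Real.exp (1/(m:ℝ)) := by
      have := Real.add_one_le_exp (1/(m:ℝ))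
      have heq : ((m+1:ℕ):ℝ)/m = 1/(m:ℝ) + 1 := by push_cast; field_simp; ring
      rw [heq]; exact this
    calc ((((m+1:ℕ):ℝ))/m)^m ≤ (Real.exp (1/(m:ℝ)))^m :=
          pow_le_pow_left₀ (by positivity) h2 m
      _ = Real.exp ((m:ℝ) * (1/(m:ℝ))) := by rw [← Real.exp_nat_mul]
      _ = Real.exp 1 := by rw [mul_one_div, div_self hmpos.ne']
  have hfin : (a/(m:ℝ))^(2*m) ≤ Real.exp 1 ^ 2 * (a/((m+1:ℕ):ℝ))^(2*m) := by
    have heq : a/(m:ℝ) = (a/((m+1:ℕ):ℝ)) * (((m+1:ℕ):ℝ)/m) := by field_simp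
    rw [heq, mul_pow]
    rw [mul_comm]
    apply mul_le_mul_of_nonneg_right _ (by positivity)
    calc (((m+1:ℕ):ℝ)/m)^(2*m) = ((((m+1:ℕ):ℝ)/m)^m)^2 := by rw [← pow_mul, mul_comm]
      _ ≤ Real.exp 1 ^ 2 := pow_le_pow_left₀ (by positivity) hratio 2
  have h2m : 2*(m+1) - 2 = 2*m := by omega
  rw [h2m]
  calc ∑ j ∈ Finset.Icc 1 m, (a / (j:ℝ)) ^ (2*j)
      ≤ (m:ℝ) * (a/(m:ℝ))^(2*m) := hsum
    _ ≤ (m:ℝ) * (Real.exp 1 ^ 2 * (a/((m+1:ℕ):ℝ))^(2*m)) := by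
        apply mul_le_mul_of_nonneg_left hfin hmpos.le
    _ ≤ ((m+1:ℕ):ℝ) * (Real.exp 1 ^ 2 * (a/((m+1:ℕ):ℝ))^(2*m)) := by
        apply mul_le_mul_of_nonneg_right _ (by positivity)
        push_cast; linarith
    _ = Real.exp 1 ^ 2 * ((m+1:ℕ):ℝ) * (a/((m+1:ℕ):ℝ))^(2*m) := by ring
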